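/- (Inverse Yau twist.) Let (A, m, α, β, e) be a unital BiHom-monoid such that α and β are bijective. Then x * y := m (α⁻¹ x) (β⁻¹ y) defines an associative multiplication on A with two-sided unit e, i.e. (A, *, e) is a monoid. -/
import Mathlib


/-- A BiHom-semigroup structure on `A`. -/
def IsBiHomSemigroup {A : Type*} (m : A → A → A) (α β : A → A) : Prop :=
  α ∘ β = β ∘ α ∧
  (∀ x y, α (m x y) = m (α x) (α y)) ∧
  (∀ x y, β (m x y) = m (β x) (β y)) ∧
  (∀ x y z, m (m x y) (β z) = m (α x) (m y z))

/-- A unital BiHom-monoid structure on `A`. -/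
def IsUnitalBiHomMonoid {A : Type*} (m : A → A → A) (α β : A → A) (e : A) : Prop :=
  IsBiHomSemigroup m α β ∧
  α e = e ∧ β e = e ∧ (∀ x, m e x = β x) ∧ (∀ x, m x e = α x)

theorem stmt_9 {A : Type*} (m : A → A → A) (α β : A → A) (e : A)
    (h : IsUnitalBiHomMonoid m α β e)
    (α' β' : A → A)
    (hα'l : Function.LeftInverse α' α) (hα'r : Function.RightInverse α' α)
    (hβ'l : Function.LeftInverse β' β) (hβ'r : Function.RightInverse β' β) :
    (∀ x y z, m (α' (m (α' x) (β' y))) (β' z) = m (α' x) (β' (m (α' y) (β' z)))) ∧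
    (∀ x, m (α' e) (β' x) = x) ∧
    (∀ x, m (α' x) (β' e) = x) := by
  obtain ⟨⟨hcomm, hαm, hβm, hassoc⟩, hαe, hβe, hel, her⟩ := h
  have hce : ∀ y, α (β y) = β (α y) := fun y => congrFun hcomm y
  have hα'm : ∀ x y, α' (m x y) = m (α' x) (α' y) := by
    intro x y
    apply hα'l.injective
    rw [hα'r, hαm, hα'r, hα'r]
  have hβ'm : ∀ x y, β' (m x y) = m (β' x) (β' y) := by
    intro x y
    apply hβ'l.injective
    rw [hβ'r, hβm, hβ'r, hβ'r]
  have hce' : ∀ z, α (β' z) = β' (α z) := by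
    intro z
    apply hβ'l.injective
    rw [← hce, hβ'r, hβ'r]
  have hcomm' : ∀ x, α' (β' x) = β' (α' x) := by
    intro x
    apply hα'l.injective
    rw [hα'r, hce', hα'r]
  have hα'e : α' e = e := by apply hα'l.injective; rw [hα'r, hαe]
  have hβ'e : β' e = e := by apply hβ'l.injective; rw [hβ'r, hβe]
  refine ⟨?_, ?_, ?_⟩
  · intro x y z
    rw [hα'm, hβ'm]
    have := hassoc (α' (α' x)) (α' (β' y)) (β' (β' z))
    rw [hβ'r, hα'r] at this
    rw [this, hcomm']
  · intro x
    rw [hα'e, hel, hβ'r]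
  · intro x
    rw [hβ'e, her, hα'r]
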